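/- Let f : ℝ → ℂ be a Schwartz function. Then for every N ∈ ℕ there exists a constant C such that for all t ∈ (0, 1]: | t · Σ_{n ∈ ℤ} f(t·n) − ∫_ℝ f(x) dx | ≤ C · t^N. -/

import Mathlib

open MeasureTheory FourierTransform Real
open scoped RealInnerProductSpace

private lemma scale_fourier (f : SchwartzMap ℝ ℂ) {t : ℝ} (ht : 0 < t) (ξ : ℝ) :
    𝓕 (fun x : ℝ ↦ f (x * t)) ξ = t⁻¹ • 𝓕 (⇑f) (ξ / t) := by
  calc 𝓕 (fun x : ℝ ↦ f (x * t)) ξ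
      = ∫ v : ℝ, (fun y : ℝ ↦
          Complex.exp (↑(-2 * π * ⟪y, ξ / t⟫) * Complex.I) • f y) (v * t) := by
        rw [Real.fourier_eq']
        congr 1 with v
        simp only [RCLike.inner_apply, conj_trivial]
        rw [show ξ / t * (v * t) = ξ * v by field_simp]
    _ = |t⁻¹| • ∫ y : ℝ, Complex.exp (↑(-2 * π * ⟪y, ξ / t⟫) * Complex.I) • f y := by
        exact Measure.integral_comp_mul_right
          (fun y : ℝ ↦ Complex.exp (↑(-2 * π * ⟪y, ξ / t⟫) * Complex.I) • f y) t
    _ = t⁻¹ • 𝓕 (⇑f) (ξ / t) := by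
        rw [Real.fourier_eq', abs_of_pos (by positivity)]

private lemma fourier_at_zero (f : SchwartzMap ℝ ℂ) : 𝓕 (⇑f) 0 = ∫ x : ℝ, f x := by
  rw [Real.fourier_eq]
  simp

private lemma poisson_scaled (f : SchwartzMap ℝ ℂ) {t : ℝ} (ht : 0 < t) :
    (t : ℂ) * ∑' n : ℤ, f (t * (n : ℝ)) = ∑' m : ℤ, 𝓕 (⇑f) ((m : ℝ) / t) := by
  set g : SchwartzMap ℝ ℂ := SchwartzMap.compCLMOfContinuousLinearEquiv ℝ
    (ContinuousLinearEquiv.unitsEquivAut ℝ (Units.mk0 t ht.ne')) f with hg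
  have hgapp : ∀ x : ℝ, g x = f (x * t) := fun x ↦ rfl
  have hP := SchwartzMap.tsum_eq_tsum_fourier g 0
  simp only [zero_add, QuotientAddGroup.mk_zero, fourier_eval_zero, mul_one,
    SchwartzMap.fourierTransformCLM_apply, SchwartzMap.fourier_coe] at hP
  have hgco : ⇑g = fun x : ℝ ↦ f (x * t) := funext hgapp
  have h1 : ∑' n : ℤ, f (t * (n : ℝ)) = ∑' n : ℤ, g (n : ℝ) := by
    congr 1 with n; rw [hgapp, mul_comm]
  have h2 : ∀ m : ℤ, 𝓕 (⇑g) (m : ℝ) = (t⁻¹ : ℂ) * 𝓕 (⇑f) ((m : ℝ) / t) := by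
    intro m
    rw [hgco, scale_fourier f ht, Complex.real_smul, Complex.ofReal_inv]
  rw [h1, hP]
  simp_rw [h2, tsum_mul_left, ← mul_assoc]
  rw [show (t : ℂ) * (↑t)⁻¹ = 1 by
    rw [mul_inv_cancel₀]
    exact_mod_cast ht.ne']
  rw [one_mul]

/-- For a Schwartz function `f : ℝ → ℂ` and every `N`, `t·Σ_{n∈ℤ} f(tn)` differs from
`∫ f` by `O(t^N)` on `(0, 1]`. -/
theorem stmt_4 (f : SchwartzMap ℝ ℂ) (N : ℕ) :
    ∃ C : ℝ, ∀ t ∈ Set.Ioc (0 : ℝ) 1,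
      ‖(t : ℂ) * (∑' n : ℤ, f (t * (n : ℝ))) - ∫ x : ℝ, f x‖ ≤ C * t ^ N := by
  obtain ⟨C, hCpos, hC⟩ := (SchwartzMap.fourierTransformCLM ℝ f).decay (N + 2) 0
  simp only [norm_iteratedFDeriv_zero, SchwartzMap.fourierTransformCLM_apply, SchwartzMap.fourier_coe] at hC
  set S : ℝ := ∑' m : ℤ, ((m : ℝ) ^ 2)⁻¹ with hS
  have hsum2 : Summable (fun m : ℤ ↦ ((m : ℝ) ^ 2)⁻¹) := by
    have := (Real.summable_one_div_int_pow (p := 2)).mpr one_lt_two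
    simpa [one_div] using this
  refine ⟨C * S, fun t ht ↦ ?_⟩
  obtain ⟨ht0, ht1⟩ := ht
  have hb : ∀ m : ℤ, ‖(if m = 0 then (0 : ℂ) else 𝓕 (⇑f) ((m : ℝ) / t))‖
      ≤ C * ((m : ℝ) ^ 2)⁻¹ * t ^ N := by
    intro m
    by_cases hm : m = 0
    · simp [hm]
    · rw [if_neg hm]
      have hm1 : (1 : ℝ) ≤ |(m : ℝ)| := by exact_mod_cast Int.one_le_abs hm
      have hmpos : (0 : ℝ) < |(m : ℝ)| := lt_of_lt_of_le one_pos hm1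
      have hx : ‖(m : ℝ) / t‖ = |(m : ℝ)| / t := by
        rw [Real.norm_eq_abs, abs_div, abs_of_pos ht0]
      have h1 := hC ((m : ℝ) / t)
      rw [hx] at h1
      have hpow : (0 : ℝ) < (|(m : ℝ)| / t) ^ (N + 2) := by positivity
      have h2 : ‖𝓕 (⇑f) ((m : ℝ) / t)‖ ≤ C / (|(m : ℝ)| / t) ^ (N + 2) := by
        rw [le_div_iff₀ hpow, mul_comm]
        exact h1
      have h3 : C / (|(m : ℝ)| / t) ^ (N + 2) = C * (t ^ (N + 2) / |(m : ℝ)| ^ (N + 2)) := by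
        rw [div_pow]; field_simp
      have h4 : t ^ (N + 2) / |(m : ℝ)| ^ (N + 2) ≤ t ^ N / (m : ℝ) ^ 2 := by
        refine div_le_div₀ (by positivity) ?_ (by positivity) ?_
        · exact pow_le_pow_of_le_one ht0.le ht1 (by omega)
        · calc (m : ℝ) ^ 2 = |(m : ℝ)| ^ 2 := (sq_abs _).symm
            _ ≤ |(m : ℝ)| ^ (N + 2) := pow_le_pow_right₀ hm1 (by omega)
      calc ‖𝓕 (⇑f) ((m : ℝ) / t)‖ ≤ C * (t ^ (N + 2) / |(m : ℝ)| ^ (N + 2)) := by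
            rw [← h3]; exact h2
        _ ≤ C * (t ^ N / (m : ℝ) ^ 2) := by
            exact mul_le_mul_of_nonneg_left h4 hCpos.le
        _ = C * ((m : ℝ) ^ 2)⁻¹ * t ^ N := by ring
  have hsummaj : Summable (fun m : ℤ ↦ C * ((m : ℝ) ^ 2)⁻¹ * t ^ N) :=
    (hsum2.mul_left C).mul_right (t ^ N)
  have hite_sum : Summable (fun m : ℤ ↦ ‖(if m = 0 then (0 : ℂ) else 𝓕 (⇑f) ((m : ℝ) / t))‖) :=
    Summable.of_nonneg_of_le (fun _ ↦ norm_nonneg _) hb hsummaj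
  have hone : Summable (fun m : ℤ ↦ if m = 0 then 𝓕 (⇑f) (((0 : ℤ) : ℝ) / t) else 0) :=
    summable_of_ne_finset_zero (s := {0}) (by intro b hbb; simp only [Finset.mem_singleton] at hbb
                                              simp [hbb])
  have hF_sum : Summable (fun m : ℤ ↦ 𝓕 (⇑f) ((m : ℝ) / t)) := by
    refine (hite_sum.of_norm.add hone).congr fun m ↦ ?_
    by_cases h : m = 0 <;> simp [h]
  rw [poisson_scaled f ht0, hF_sum.tsum_eq_add_tsum_ite 0]
  rw [show (((0 : ℤ) : ℝ) / t) = (0 : ℝ) by simp, fourier_at_zero, add_comm,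
    add_sub_cancel_right]
  calc ‖∑' m : ℤ, (if m = 0 then (0 : ℂ) else 𝓕 (⇑f) ((m : ℝ) / t))‖
      ≤ ∑' m : ℤ, ‖(if m = 0 then (0 : ℂ) else 𝓕 (⇑f) ((m : ℝ) / t))‖ :=
        norm_tsum_le_tsum_norm hite_sum
    _ ≤ ∑' m : ℤ, C * ((m : ℝ) ^ 2)⁻¹ * t ^ N := Summable.tsum_le_tsum hb hite_sum hsummaj
    _ = C * S * t ^ N := by
        rw [hS]
        simp_rw [mul_assoc, tsum_mul_left, ← tsum_mul_right]
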